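/- Let A be an n×n real matrix with singular value decomposition A = U S V^T, and suppose the nonzero singular values are s_1, ..., s_k. For even L, there exist matrices W_1, ..., W_L (as in the diagonal-interpolation construction) with W_L ⋯ W_1 = A and Σ_ℓ ‖W_ℓ‖_F^2 = L·Tr[S_+^{2/L}] = L·k + 2 Σ_i log s_i + (1/(2L)) Σ_i (2 log s_i)^2 + O(L^{-2}). -/

import Mathlib

open Matrix Finset

theorem Matrix.isHermitian_transpose_mul_self {m n α : Type*} [Fintype m] [CommSemiring α]
    [StarRing α] [TrivialStar α] (A : Matrix m n α) : (Aᵀ * A).IsHermitian := by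
  simpa [conjTranspose_eq_transpose_of_trivial] using isHermitian_conjTranspose_mul_self A
/-- The singular values of a real matrix, listed in decreasing order (square roots of the
eigenvalues of `Aᵀ A`, sorted). -/
noncomputable def singularValues {m n : ℕ} (A : Matrix (Fin m) (Fin n) ℝ) : Fin n → ℝ :=
  fun i => Real.sqrt (((Matrix.isHermitian_transpose_mul_self A).eigenvalues ∘
    Tuple.sort ((Matrix.isHermitian_transpose_mul_self A).eigenvalues)) i.rev)

/-- The `i`-th largest singular value (0-indexed), zero-padded beyond the matrix dimensions. -/
noncomputable def sval {m n : ℕ} (A : Matrix (Fin m) (Fin n) ℝ) (i : ℕ) : ℝ :=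
  if h : i < n then singularValues A ⟨i, h⟩ else 0


/-- The product `W_ℓ ⋯ W_1`. -/
def matProd {n : ℕ} (W : ℕ → Matrix (Fin n) (Fin n) ℝ) : ℕ → Matrix (Fin n) (Fin n) ℝ
  | 0 => 1
  | ℓ + 1 => W (ℓ + 1) * matProd W ℓ

/-! ### Auxiliary analytic lemmas -/

noncomputable def Kfun (u : ℝ) : ℝ := |u|^3 * Real.exp |u| + 3*|u|^3 + |u|^4

lemma cubic_exp (y : ℝ) (hy : |y| ≤ 1) : |Real.exp y - (1 + y + y^2/2)| ≤ |y|^3 := by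
  have h := Real.exp_bound hy (by norm_num : 0 < 3)
  have hsum : ∑ i ∈ Finset.range 3, y ^ i / (Nat.factorial i) = 1 + y + y^2/2 := by
    simp [Finset.sum_range_succ, Nat.factorial]
  rw [hsum] at h
  have hy3 : (0:ℝ) ≤ |y|^3 := by positivity
  calc |Real.exp y - (1 + y + y^2/2)| ≤ |y|^3 * ((3:ℕ).succ / ((Nat.factorial 3) * 3) : ℝ) := h
    _ ≤ |y|^3 * 1 := by
        apply mul_le_mul_of_nonneg_left _ hy3
        norm_num [Nat.factorial]
    _ = |y|^3 := by ring

lemma key_exp (u : ℝ) (L : ℕ) (hL : 1 ≤ L) :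
    |(L:ℝ) * Real.exp (u / L) - ((L:ℝ) + u + u^2/(2*L))| ≤ Kfun u / (L:ℝ)^2 := by
  have hL0 : (0:ℝ) < L := by exact_mod_cast hL
  have hL1 : (1:ℝ) ≤ L := by exact_mod_cast hL
  have hexp1 : (1:ℝ) ≤ Real.exp |u| := Real.one_le_exp (abs_nonneg u)
  have hu3 : (0:ℝ) ≤ |u|^3 := by positivity
  have hu4 : (0:ℝ) ≤ |u|^4 := by positivity
  by_cases hcase : |u| ≤ (L:ℝ)
  · have hy : |u / L| ≤ 1 := by
      rw [abs_div, abs_of_pos hL0]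
      exact div_le_one_of_le₀ hcase hL0.le
    have h := cubic_exp (u/L) hy
    have heq : (L:ℝ) * Real.exp (u/L) - ((L:ℝ) + u + u^2/(2*L))
        = (L:ℝ) * (Real.exp (u/L) - (1 + u/L + (u/L)^2/2)) := by
      field_simp
    rw [heq, abs_mul, abs_of_pos hL0]
    have h2 : (L:ℝ) * |Real.exp (u/L) - (1 + u/L + (u/L)^2/2)| ≤ (L:ℝ) * (|u|^3 / (L:ℝ)^3) := by
      apply mul_le_mul_of_nonneg_left _ hL0.le
      calc |Real.exp (u/L) - (1 + u/L + (u/L)^2/2)| ≤ |u/L|^3 := h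
        _ = |u|^3 / (L:ℝ)^3 := by rw [abs_div, abs_of_pos hL0, div_pow]
    refine h2.trans ?_
    have h3 : (L:ℝ) * (|u|^3/(L:ℝ)^3) = |u|^3 / (L:ℝ)^2 := by
      field_simp
    rw [h3, Kfun]
    gcongr ?x / _
    nlinarith
  · push_neg at hcase
    have hu0 : (0:ℝ) < |u| := lt_trans hL0 hcase
    have hU1 : (1:ℝ) ≤ |u| := le_trans hL1 hcase.le
    have hexp : Real.exp (u/L) ≤ Real.exp |u| := by
      apply Real.exp_le_exp.mpr
      calc u / L ≤ |u| / L := by gcongr; exact le_abs_self u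
        _ ≤ |u| := by
            rw [div_le_iff₀ hL0]
            nlinarith
    have habs : |(L:ℝ) * Real.exp (u / L) - ((L:ℝ) + u + u^2/(2*L))|
        ≤ (L:ℝ) * Real.exp (u/L) + ((L:ℝ) + |u| + u^2/(2*L)) := by
      have h1 : |(L:ℝ) * Real.exp (u / L)| = (L:ℝ) * Real.exp (u/L) := by
        exact abs_of_pos (by positivity)
      calc |(L:ℝ) * Real.exp (u / L) - ((L:ℝ) + u + u^2/(2*L))|
          ≤ |(L:ℝ) * Real.exp (u / L)| + |(L:ℝ) + u + u^2/(2*L)| := abs_sub _ _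
        _ ≤ (L:ℝ) * Real.exp (u/L) + ((L:ℝ) + |u| + u^2/(2*L)) := by
            rw [h1]
            gcongr
            calc |(L:ℝ) + u + u^2/(2*L)| ≤ |(L:ℝ)| + |u| + |u^2/(2*L)| := by
                  exact (abs_add_le _ _).trans (by gcongr; exact abs_add_le _ _)
              _ = (L:ℝ) + |u| + u^2/(2*L) := by
                  rw [abs_of_pos hL0, abs_of_nonneg (by positivity : (0:ℝ) ≤ u^2/(2*L))]
    have hT : (L:ℝ) * Real.exp (u/L) + ((L:ℝ) + |u| + u^2/(2*L))
        ≤ |u| * Real.exp |u| + 2*|u| + u^2 := by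
      have e1 : (L:ℝ) * Real.exp (u/L) ≤ |u| * Real.exp |u| := by
        apply mul_le_mul hcase.le hexp (Real.exp_pos _).le hu0.le
      have e2 : u^2/(2*L) ≤ u^2 := by
        apply div_le_self (sq_nonneg u)
        linarith
      linarith
    refine habs.trans (hT.trans ?_)
    rw [le_div_iff₀ (by positivity : (0:ℝ) < (L:ℝ)^2), Kfun]
    have hsq : (L:ℝ)^2 ≤ |u|^2 := by nlinarith
    have hT0 : (0:ℝ) ≤ |u| * Real.exp |u| + 2*|u| + u^2 := by positivity
    have := mul_le_mul_of_nonneg_left hsq hT0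
    nlinarith [sq_abs u]

lemma key_s (s : ℝ) (hs : 0 < s) (L : ℕ) (hL : 1 ≤ L) :
    |(L:ℝ) * s ^ ((2:ℝ)/L) - ((L:ℝ) * 1 + 2*Real.log s + (1/(2*(L:ℝ)))*(2*Real.log s)^2)|
      ≤ Kfun (2*Real.log s) / (L:ℝ)^2 := by
  have h1 : s ^ ((2:ℝ)/L) = Real.exp ((2*Real.log s) / L) := by
    rw [Real.rpow_def_of_pos hs]
    congr 1
    ring
  have h2 : (1/(2*(L:ℝ)))*(2*Real.log s)^2 = (2*Real.log s)^2/(2*(L:ℝ)) := by ring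
  rw [h1, h2, mul_one]
  exact key_exp (2*Real.log s) L hL

/-! ### Auxiliary matrix lemmas -/

section MatrixAux

variable {n : ℕ}

lemma sandwich_mul (V : Matrix (Fin n) (Fin n) ℝ) (hV : Vᵀ * V = 1) (d e : Fin n → ℝ) :
    (V * diagonal d * Vᵀ) * (V * diagonal e * Vᵀ) = V * diagonal (fun i => d i * e i) * Vᵀ := by
  have h1 : Vᵀ * (V * (diagonal e * Vᵀ)) = diagonal e * Vᵀ := by
    rw [← mul_assoc, hV, one_mul]
  calc (V * diagonal d * Vᵀ) * (V * diagonal e * Vᵀ)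
      = V * (diagonal d * (Vᵀ * (V * (diagonal e * Vᵀ)))) := by simp only [mul_assoc]
    _ = V * (diagonal d * (diagonal e * Vᵀ)) := by rw [h1]
    _ = V * (diagonal d * diagonal e) * Vᵀ := by simp only [mul_assoc]
    _ = V * diagonal (fun i => d i * e i) * Vᵀ := by rw [diagonal_mul_diagonal]

lemma sandwich_transpose (V : Matrix (Fin n) (Fin n) ℝ) (d : Fin n → ℝ) :
    (V * diagonal d * Vᵀ)ᵀ = V * diagonal d * Vᵀ := by
  rw [transpose_mul, transpose_mul, transpose_transpose, diagonal_transpose, mul_assoc]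

lemma frob_eq_trace (M : Matrix (Fin n) (Fin n) ℝ) :
    ∑ i, ∑ j, (M i j)^2 = trace (Mᵀ * M) := by
  simp only [trace, Matrix.mul_apply, diag_apply, transpose_apply, sq]
  exact Finset.sum_comm

lemma trace_sandwich (V : Matrix (Fin n) (Fin n) ℝ) (hV : Vᵀ * V = 1) (d : Fin n → ℝ) :
    trace (V * diagonal d * Vᵀ) = ∑ i, d i := by
  rw [trace_mul_cycle, hV, one_mul, trace_diagonal]

lemma frob_sandwich (V : Matrix (Fin n) (Fin n) ℝ) (hV : Vᵀ * V = 1) (d : Fin n → ℝ) :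
    ∑ i, ∑ j, ((V * diagonal d * Vᵀ) i j)^2 = ∑ k, d k * d k := by
  rw [frob_eq_trace, sandwich_transpose, sandwich_mul V hV, trace_sandwich V hV]

lemma frob_A_sandwich (A V : Matrix (Fin n) (Fin n) ℝ) (hV : Vᵀ * V = 1) (ev d : Fin n → ℝ)
    (hspec : Aᵀ * A = V * diagonal ev * Vᵀ) :
    ∑ i, ∑ j, ((A * (V * diagonal d * Vᵀ)) i j)^2 = ∑ k, d k * (ev k * d k) := by
  rw [frob_eq_trace, transpose_mul, sandwich_transpose]
  have h : (V * diagonal d * Vᵀ) * Aᵀ * A * (V * diagonal d * Vᵀ)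
      = V * diagonal (fun k => d k * (ev k * d k)) * Vᵀ := by
    calc (V * diagonal d * Vᵀ) * Aᵀ * A * (V * diagonal d * Vᵀ)
        = (V * diagonal d * Vᵀ) * ((Aᵀ * A) * (V * diagonal d * Vᵀ)) := by
          simp only [mul_assoc]
      _ = (V * diagonal d * Vᵀ) * ((V * diagonal ev * Vᵀ) * (V * diagonal d * Vᵀ)) := by
          rw [hspec]
      _ = (V * diagonal d * Vᵀ) * (V * diagonal (fun k => ev k * d k) * Vᵀ) := by
          rw [sandwich_mul V hV]
      _ = V * diagonal (fun k => d k * (ev k * d k)) * Vᵀ := by rw [sandwich_mul V hV]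
  rw [← mul_assoc, h, trace_sandwich V hV]

lemma ker_col (A V : Matrix (Fin n) (Fin n) ℝ) (hV : Vᵀ * V = 1) (ev : Fin n → ℝ)
    (hspec : Aᵀ * A = V * diagonal ev * Vᵀ) (j : Fin n) (h0 : ev j = 0) (i : Fin n) :
    (A * V) i j = 0 := by
  have hBB : (A * V)ᵀ * (A * V) = diagonal ev := by
    rw [transpose_mul]
    calc Vᵀ * Aᵀ * (A * V) = Vᵀ * (Aᵀ * A) * V := by simp only [mul_assoc]
      _ = Vᵀ * (V * diagonal ev * Vᵀ) * V := by rw [hspec]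
      _ = (Vᵀ * V) * diagonal ev * (Vᵀ * V) := by simp only [mul_assoc]
      _ = diagonal ev := by rw [hV, one_mul, mul_one]
  have hsum : ∑ k, (A * V) k j ^ 2 = 0 := by
    have h2 : ((A * V)ᵀ * (A * V)) j j = ∑ k, ((A * V) k j)^2 := by
      simp [Matrix.mul_apply, sq, mul_comm]
    rw [← h2, hBB, diagonal_apply_eq, h0]
  have := (Finset.sum_eq_zero_iff_of_nonneg (fun k _ => sq_nonneg ((A*V) k j))).mp hsum i
    (Finset.mem_univ i)
  exact (pow_eq_zero_iff (by norm_num : (2:ℕ) ≠ 0)).mp this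

end MatrixAux

/-! ### Transport between singular values and eigenvalues -/

lemma transport {m n : ℕ} (A : Matrix (Fin m) (Fin n) ℝ) (F : ℝ → ℝ) :
    ∑ i ∈ Finset.univ.filter (fun i => singularValues A i ≠ 0), F (singularValues A i)
      = ∑ j ∈ Finset.univ.filter
          (fun j => (Matrix.isHermitian_transpose_mul_self A).eigenvalues j ≠ 0),
          F (Real.sqrt ((Matrix.isHermitian_transpose_mul_self A).eigenvalues j)) := by
  set ev : Fin n → ℝ := (Matrix.isHermitian_transpose_mul_self A).eigenvalues with hev
  have hev0 : ∀ i, 0 ≤ ev i := Matrix.eigenvalues_conjTranspose_mul_self_nonneg A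
  rw [Finset.sum_filter, Finset.sum_filter]
  refine Fintype.sum_equiv (Fin.revPerm.trans (Tuple.sort ev)) _ _ (fun i => ?_)
  have hsv : singularValues A i = Real.sqrt (ev ((Fin.revPerm.trans (Tuple.sort ev)) i)) := rfl
  rw [hsv]
  have hiff : Real.sqrt (ev ((Fin.revPerm.trans (Tuple.sort ev)) i)) ≠ 0
      ↔ ev ((Fin.revPerm.trans (Tuple.sort ev)) i) ≠ 0 := by
    rw [ne_eq, ne_eq, Real.sqrt_eq_zero', not_iff_not]
    constructor
    · intro h; exact le_antisymm h (hev0 _)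
    · intro h; exact h.le
  by_cases h : ev ((Fin.revPerm.trans (Tuple.sort ev)) i) ≠ 0
  · rw [if_pos (hiff.mpr h), if_pos h]
  · rw [if_neg (fun hc => h (hiff.mp hc)), if_neg h]

/-- For a square matrix `A` with nonzero singular values `s₁,…,s_k`, for every even depth `L`
there exist `W_1,…,W_L` with `W_L ⋯ W_1 = A` and
`∑_ℓ ‖W_ℓ‖_F² = L·Tr[S₊^{2/L}] = L·k + 2∑ᵢ log sᵢ + (1/(2L))∑ᵢ(2 log sᵢ)² + O(L⁻²)`. -/
theorem stmt17 {n : ℕ} (A : Matrix (Fin n) (Fin n) ℝ) :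
    ∃ C : ℝ, ∀ L : ℕ, Even L → 0 < L →
      ∃ W : ℕ → Matrix (Fin n) (Fin n) ℝ,
        matProd W L = A ∧
        (∑ ℓ ∈ Finset.Icc 1 L, ∑ i, ∑ j, (W ℓ i j) ^ 2 =
          (L : ℝ) * ∑ i ∈ Finset.univ.filter (fun i => singularValues A i ≠ 0),
            singularValues A i ^ ((2 : ℝ) / L)) ∧
        |(L : ℝ) * (∑ i ∈ Finset.univ.filter (fun i => singularValues A i ≠ 0),
              singularValues A i ^ ((2 : ℝ) / L)) -
            ((L : ℝ) * (Finset.univ.filter (fun i => singularValues A i ≠ 0)).card +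
              2 * (∑ i ∈ Finset.univ.filter (fun i => singularValues A i ≠ 0),
                Real.log (singularValues A i)) +
              (1 / (2 * (L : ℝ))) *
                ∑ i ∈ Finset.univ.filter (fun i => singularValues A i ≠ 0),
                  (2 * Real.log (singularValues A i)) ^ 2)| ≤ C / (L : ℝ) ^ 2 := by
  classical
  have hA : (Aᴴ * A).IsHermitian := Matrix.isHermitian_transpose_mul_self A
  set ev : Fin n → ℝ := (Matrix.isHermitian_transpose_mul_self A).eigenvalues with hev
  set V : Matrix (Fin n) (Fin n) ℝ :=
    (Matrix.IsHermitian.eigenvectorUnitary hA : Matrix (Fin n) (Fin n) ℝ) with hVdef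
  have hstar : star V = Vᵀ := by
    rw [Matrix.star_eq_conjTranspose, Matrix.conjTranspose_eq_transpose_of_trivial]
  have hV2 : V * Vᵀ = 1 := by
    rw [← hstar]; exact Matrix.mem_unitaryGroup_iff.mp (Matrix.IsHermitian.eigenvectorUnitary hA).2
  have hV1 : Vᵀ * V = 1 := by
    rw [← hstar]; exact Matrix.mem_unitaryGroup_iff'.mp (Matrix.IsHermitian.eigenvectorUnitary hA).2
  have hspec : Aᵀ * A = V * diagonal ev * Vᵀ := by
    have h := Matrix.IsHermitian.spectral_theorem hA
    rw [Unitary.conjStarAlgAut_apply, hstar] at h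
    simp [Matrix.conjTranspose_eq_transpose_of_trivial, RCLike.ofReal_real_eq_id] at h
    exact h
  have hev0 : ∀ i, 0 ≤ ev i := Matrix.eigenvalues_conjTranspose_mul_self_nonneg A
  have hsv_nonneg : ∀ i, 0 ≤ singularValues A i := fun i => Real.sqrt_nonneg _
  refine ⟨∑ i ∈ Finset.univ.filter (fun i => singularValues A i ≠ 0),
      Kfun (2 * Real.log (singularValues A i)), fun L hLe hLpos => ?_⟩
  have hL2 : 2 ≤ L := by
    rcases hLe with ⟨r, hr⟩
    omega
  have hL1 : 1 ≤ L := by omega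
  have hlr0 : (0:ℝ) < (L:ℝ) := by exact_mod_cast hLpos
  have hlr : (L:ℝ) ≠ 0 := ne_of_gt hlr0
  have hlr2 : (2:ℝ) ≤ (L:ℝ) := by exact_mod_cast hL2
  set c : ℝ := 1/(2*(L:ℝ)) with hc
  set t0 : ℝ := (1-(L:ℝ))/(2*(L:ℝ)) with ht0
  have hc0 : 0 < c := by rw [hc]; positivity
  set P : ℝ → Matrix (Fin n) (Fin n) ℝ :=
    fun t => V * diagonal (fun i => ev i ^ t) * Vᵀ with hP
  set W : ℕ → Matrix (Fin n) (Fin n) ℝ := fun ℓ => if ℓ = L then A * P t0 else P c with hW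
  -- the partial products below the top layer
  have hprod_lt : ∀ m, m < L → matProd W m = P ((m:ℝ) * c) := by
    intro m
    induction m with
    | zero =>
        intro _
        show (1 : Matrix (Fin n) (Fin n) ℝ) = P (((0:ℕ):ℝ) * c)
        rw [hP]
        simp only [Nat.cast_zero, zero_mul, Real.rpow_zero]
        rw [diagonal_one, mul_one, hV2]
    | succ m ih =>
        intro hm
        have hmL : m < L := by omega
        have hne : m + 1 ≠ L := by omega
        show W (m+1) * matProd W m = P (((m+1:ℕ) : ℝ) * c)
        rw [ih hmL, hW]
        simp only [if_neg hne]
        rw [hP]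
        rw [sandwich_mul V hV1]
        have hfun : (fun i => ev i ^ c * ev i ^ ((m:ℝ) * c))
            = fun i => ev i ^ (((m+1:ℕ):ℝ) * c) := by
          funext i
          rw [← Real.rpow_add' (hev0 i) (by positivity : c + (m:ℝ) * c ≠ 0)]
          congr 1
          push_cast
          ring
        rw [hfun]
  obtain ⟨M, hM⟩ : ∃ M, L = M + 1 := ⟨L - 1, by omega⟩
  have hMc : (M:ℝ) = (L:ℝ) - 1 := by
    have : (L:ℝ) = (M:ℝ) + 1 := by exact_mod_cast hM
    linarith
  refine ⟨W, ?_, ?_, ?_⟩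
  · -- product equals A
    rw [hM]
    show W (M+1) * matProd W M = A
    rw [hprod_lt M (by omega), hW]
    simp only [if_pos hM.symm]
    rw [hP, mul_assoc, sandwich_mul V hV1]
    have hgone : A * V * diagonal (fun i => ev i ^ t0 * ev i ^ ((M:ℝ) * c)) = A * V := by
      ext i j
      rw [mul_diagonal]
      by_cases h0 : ev j = 0
      · rw [ker_col A V hV1 ev hspec j h0 i, zero_mul]
      · have hpos : 0 < ev j := lt_of_le_of_ne (hev0 j) (Ne.symm h0)
        rw [← Real.rpow_add hpos]
        have : t0 + (M:ℝ) * c = 0 := by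
          rw [ht0, hc, hMc]
          field_simp
          ring
        rw [this, Real.rpow_zero, mul_one]
    calc A * (V * diagonal (fun i => ev i ^ t0 * ev i ^ ((M:ℝ) * c)) * Vᵀ)
        = (A * V * diagonal (fun i => ev i ^ t0 * ev i ^ ((M:ℝ) * c))) * Vᵀ := by
          simp only [mul_assoc]
      _ = (A * V) * Vᵀ := by rw [hgone]
      _ = A * (V * Vᵀ) := by rw [mul_assoc]
      _ = A := by rw [hV2, mul_one]
  · -- Frobenius sum identity
    have hfrob_c : ∑ i, ∑ j, ((P c) i j)^2 = ∑ k, ev k ^ ((1:ℝ)/(L:ℝ)) := by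
      rw [hP, frob_sandwich V hV1]
      refine Finset.sum_congr rfl fun k _ => ?_
      have hcc : c + c = 1/(L:ℝ) := by
        rw [hc]
        field_simp
        norm_num
      rw [← Real.rpow_add' (hev0 k) (by positivity : c + c ≠ 0), hcc]
    have hfrob_top : ∑ i, ∑ j, ((A * P t0) i j)^2 = ∑ k, ev k ^ ((1:ℝ)/(L:ℝ)) := by
      rw [hP, frob_A_sandwich A V hV1 ev _ hspec]
      refine Finset.sum_congr rfl fun k _ => ?_
      by_cases h0 : ev k = 0
      · rw [h0, Real.zero_rpow (by positivity : (1:ℝ)/(L:ℝ) ≠ 0)]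
        ring
      · have hpos : 0 < ev k := lt_of_le_of_ne (hev0 k) (Ne.symm h0)
        have htt : t0 + (1 + t0) = 1/(L:ℝ) := by
          rw [ht0]
          field_simp
          ring
        nth_rewrite 2 [show ev k = ev k ^ (1:ℝ) by rw [Real.rpow_one]]
        rw [← Real.rpow_add hpos, ← Real.rpow_add hpos, htt]
    have hsum : ∑ ℓ ∈ Finset.Icc 1 L, ∑ i, ∑ j, (W ℓ i j) ^ 2
        = (L:ℝ) * ∑ k, ev k ^ ((1:ℝ)/(L:ℝ)) := by
      rw [hM, Finset.sum_Icc_succ_top (by omega : 1 ≤ M + 1)]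
      have h1 : ∀ ℓ ∈ Finset.Icc 1 M, ∑ i, ∑ j, (W ℓ i j) ^ 2
          = ∑ k, ev k ^ ((1:ℝ)/(L:ℝ)) := by
        intro ℓ hℓ
        rw [Finset.mem_Icc] at hℓ
        have : ℓ ≠ L := by omega
        rw [hW]
        simp only [if_neg this]
        exact hfrob_c
      rw [Finset.sum_congr rfl h1, Finset.sum_const, Nat.card_Icc]
      have h2 : W (M+1) = A * P t0 := by rw [hW]; simp only [if_pos hM.symm]
      rw [h2, hfrob_top]
      have : (M + 1 - 1 : ℕ) = M := by omega
      rw [this, nsmul_eq_mul]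
      have hLM : (L:ℝ) = 1 + (M:ℝ) := by rw [hM]; push_cast; ring
      rw [hLM]
      push_cast
      ring
    rw [hsum, transport A (fun x => x ^ ((2:ℝ)/(L:ℝ)))]
    congr 1
    rw [Finset.sum_filter]
    refine Finset.sum_congr rfl fun k _ => ?_
    by_cases h0 : ev k = 0
    · rw [if_neg (not_not.mpr h0), h0,
        Real.zero_rpow (by positivity : (1:ℝ)/(L:ℝ) ≠ 0)]
    · have hxx : (1/2 : ℝ) * (2/(L:ℝ)) = 1/(L:ℝ) := by
        field_simp
      rw [if_pos h0, Real.sqrt_eq_rpow, ← Real.rpow_mul (hev0 k), hxx]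
  · -- asymptotic estimate
    have hsplit : (L : ℝ) * (∑ i ∈ Finset.univ.filter (fun i => singularValues A i ≠ 0),
          singularValues A i ^ ((2 : ℝ) / L)) -
        ((L : ℝ) * (Finset.univ.filter (fun i => singularValues A i ≠ 0)).card +
          2 * (∑ i ∈ Finset.univ.filter (fun i => singularValues A i ≠ 0),
            Real.log (singularValues A i)) +
          (1 / (2 * (L : ℝ))) *
            ∑ i ∈ Finset.univ.filter (fun i => singularValues A i ≠ 0),
              (2 * Real.log (singularValues A i)) ^ 2)
        = ∑ i ∈ Finset.univ.filter (fun i => singularValues A i ≠ 0),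
            ((L:ℝ) * singularValues A i ^ ((2 : ℝ) / L) -
              ((L:ℝ) * 1 + 2 * Real.log (singularValues A i) +
                (1 / (2 * (L:ℝ))) * (2 * Real.log (singularValues A i)) ^ 2)) := by
      rw [Finset.card_eq_sum_ones]
      push_cast
      rw [Finset.mul_sum, Finset.mul_sum, Finset.mul_sum, Finset.mul_sum]
      rw [← Finset.sum_add_distrib, ← Finset.sum_add_distrib, ← Finset.sum_sub_distrib]
    rw [hsplit]
    calc |∑ i ∈ Finset.univ.filter (fun i => singularValues A i ≠ 0),
            ((L:ℝ) * singularValues A i ^ ((2 : ℝ) / L) -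
              ((L:ℝ) * 1 + 2 * Real.log (singularValues A i) +
                (1 / (2 * (L:ℝ))) * (2 * Real.log (singularValues A i)) ^ 2))|
        ≤ ∑ i ∈ Finset.univ.filter (fun i => singularValues A i ≠ 0),
            |(L:ℝ) * singularValues A i ^ ((2 : ℝ) / L) -
              ((L:ℝ) * 1 + 2 * Real.log (singularValues A i) +
                (1 / (2 * (L:ℝ))) * (2 * Real.log (singularValues A i)) ^ 2)| :=
          Finset.abs_sum_le_sum_abs _ _
      _ ≤ ∑ i ∈ Finset.univ.filter (fun i => singularValues A i ≠ 0),
            Kfun (2 * Real.log (singularValues A i)) / (L:ℝ)^2 := by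
          refine Finset.sum_le_sum fun i hi => ?_
          rw [Finset.mem_filter] at hi
          have hpos : 0 < singularValues A i :=
            lt_of_le_of_ne (hsv_nonneg i) (Ne.symm hi.2)
          exact key_s _ hpos L hL1
      _ = (∑ i ∈ Finset.univ.filter (fun i => singularValues A i ≠ 0),
            Kfun (2 * Real.log (singularValues A i))) / (L:ℝ)^2 := by
          rw [Finset.sum_div]
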